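/- Let Δ ⊂ ℤ² be finite and let U(Δ) = -2 Σ_{x∈Δ} Σ_{y∈ℤ²∖Δ} |x-y|^{-p} with p > 4. Then U(Δ) is finite and U(Δ) ≥ -2 |∂Δ| Σ_{n∈ℤ², n≠0} |n₁|/|n|^p, where |∂Δ| is the number of nearest-neighbor bonds separating Δ from its complement. -/

import Mathlib

/-- Euclidean norm of a point of `ℤ²`. -/
noncomputable def zNorm (x : ℤ × ℤ) : ℝ := Real.sqrt ((x.1 : ℝ) ^ 2 + (x.2 : ℝ) ^ 2)

section helpers

lemma zNorm_nonneg (x : ℤ × ℤ) : 0 ≤ zNorm x := Real.sqrt_nonneg _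

lemma zNorm_pos {x : ℤ × ℤ} (hx : x ≠ 0) : 0 < zNorm x := by
  apply Real.sqrt_pos.2
  have h1 : x.1 ≠ 0 ∨ x.2 ≠ 0 := by
    by_contra h; push_neg at h; exact hx (Prod.ext h.1 h.2)
  rcases h1 with h | h
  · have : (0:ℝ) < (x.1:ℝ)^2 := by positivity
    nlinarith [sq_nonneg (x.2:ℝ)]
  · have : (0:ℝ) < (x.2:ℝ)^2 := by positivity
    nlinarith [sq_nonneg (x.1:ℝ)]

lemma abs_fst_le_zNorm (x : ℤ × ℤ) : |(x.1 : ℝ)| ≤ zNorm x := by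
  rw [← Real.sqrt_sq_eq_abs]
  exact Real.sqrt_le_sqrt (by nlinarith [sq_nonneg (x.2:ℝ)])

lemma abs_snd_le_zNorm (x : ℤ × ℤ) : |(x.2 : ℝ)| ≤ zNorm x := by
  rw [← Real.sqrt_sq_eq_abs]
  exact Real.sqrt_le_sqrt (by nlinarith [sq_nonneg (x.1:ℝ)])

lemma summable_zNorm_rpow {q : ℝ} (hq : 2 < q) :
    Summable (fun n : ℤ × ℤ => zNorm n ^ (-q)) := by
  have h := EisensteinSeries.summable_one_div_norm_rpow hq
  have h2 : Summable (fun x : Fin 2 → ℤ => zNorm (x 0, x 1) ^ (-q)) := by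
    refine h.of_nonneg_of_le (fun x => Real.rpow_nonneg (zNorm_nonneg _) _) (fun x => ?_)
    rcases eq_or_ne x 0 with rfl | hx
    · have hq0 : -q ≠ 0 := by linarith
      simp [zNorm, Real.zero_rpow hq0]
    · refine Real.rpow_le_rpow_of_nonpos (norm_pos_iff.2 hx) ?_ (by linarith)
      rw [EisensteinSeries.norm_eq_max_natAbs]
      rcases max_cases (x 0).natAbs (x 1).natAbs with ⟨he, _⟩ | ⟨he, _⟩ <;> rw [he]
      · calc ((x 0).natAbs : ℝ) = |((x 0 : ℤ) : ℝ)| := by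
              rw [Nat.cast_natAbs, Int.cast_abs]
          _ ≤ _ := abs_fst_le_zNorm (x 0, x 1)
      · calc ((x 1).natAbs : ℝ) = |((x 1 : ℤ) : ℝ)| := by
              rw [Nat.cast_natAbs, Int.cast_abs]
          _ ≤ _ := abs_snd_le_zNorm (x 0, x 1)
  exact (Equiv.summable_iff (finTwoArrowEquiv ℤ)).1 (h2.congr fun x => by simp [finTwoArrowEquiv])

def pathPt (x n : ℤ × ℤ) (k : ℕ) : ℤ × ℤ :=
  (x.1 + n.1.sign * ((min k n.1.natAbs : ℕ) : ℤ),
   x.2 + n.2.sign * ((min (k - n.1.natAbs) n.2.natAbs : ℕ) : ℤ))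

lemma pathPt_zero (x n : ℤ × ℤ) : pathPt x n 0 = x := by simp [pathPt]

lemma pathPt_last (x n : ℤ × ℤ) : pathPt x n (n.1.natAbs + n.2.natAbs) = x + n := by
  unfold pathPt
  rw [min_eq_right (by omega), Nat.add_sub_cancel_left, min_self,
    Int.sign_mul_natAbs, Int.sign_mul_natAbs]
  rfl

lemma pathPt_le {x n : ℤ × ℤ} {k : ℕ} (h : k ≤ n.1.natAbs) :
    pathPt x n k = (x.1 + n.1.sign * k, x.2) := by
  unfold pathPt
  rw [min_eq_left h, Nat.sub_eq_zero_of_le h]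
  simp

lemma pathPt_ge {x n : ℤ × ℤ} {k : ℕ} (h : n.1.natAbs ≤ k)
    (h2 : k - n.1.natAbs ≤ n.2.natAbs) :
    pathPt x n k = (x.1 + n.1, x.2 + n.2.sign * ((k - n.1.natAbs : ℕ) : ℤ)) := by
  unfold pathPt
  rw [min_eq_right h, min_eq_left h2, Int.sign_mul_natAbs]

def recon (b : (ℤ × ℤ) × (ℤ × ℤ)) (m : ℤ × ℤ) (i : ℕ) : (ℤ × ℤ) × (ℤ × ℤ) :=
  if b.2.2 = b.1.2 then
    ((b.1.1 - m.1.sign * i, b.1.2), (b.1.1 - m.1.sign * i + m.1, b.1.2 + m.2))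
  else
    ((b.1.1 - m.2, b.1.2 - m.1.sign * i), (b.1.1, b.1.2 - m.1.sign * i + m.1))

lemma sign_pm {a : ℤ} (h : a ≠ 0) : a.sign = 1 ∨ a.sign = -1 := by
  rcases lt_trichotomy a 0 with h' | h' | h'
  · right; exact Int.sign_eq_neg_one_iff_neg.2 h'
  · exact absurd h' h
  · left; exact Int.sign_eq_one_iff_pos.2 h'

lemma zNorm_unit {s : ℤ} (hs : s = 1 ∨ s = -1) : zNorm (s, 0) = 1 ∧ zNorm (0, s) = 1 := by
  rcases hs with rfl | rfl <;> constructor <;>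
    · show Real.sqrt _ = 1
      norm_num

lemma crossing (Δ : Finset (ℤ × ℤ)) {x y : ℤ × ℤ} (hx : x ∈ Δ) (hy : y ∉ Δ) :
    ∃ (a a' m : ℤ × ℤ) (i : ℕ), a ∈ Δ ∧ a' ∉ Δ ∧ zNorm (a - a') = 1 ∧ m ≠ 0 ∧
      i < m.1.natAbs ∧ recon (a, a') m i = (x, y) ∧ zNorm m = zNorm (x - y) := by
  set n := y - x with hn
  have hy' : y = x + n := by rw [hn]; ring
  have hex : ∃ k, pathPt x n k ∉ Δ := ⟨n.1.natAbs + n.2.natAbs, by rwa [pathPt_last, ← hy']⟩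
  set K := Nat.find hex with hK
  have hKspec : pathPt x n K ∉ Δ := Nat.find_spec hex
  have hK0 : 0 < K := by
    rcases Nat.eq_zero_or_pos K with h | h
    · rw [h] at hKspec; rw [pathPt_zero] at hKspec; exact absurd hx hKspec
    · exact h
  have hKN : K ≤ n.1.natAbs + n.2.natAbs := Nat.find_le (by rwa [pathPt_last, ← hy'])
  set j := K - 1 with hj
  have hKj : K = j + 1 := by omega
  have hjΔ : pathPt x n j ∈ Δ := by
    by_contra h
    exact (Nat.find_min hex (show j < K by omega)) h
  have hjN : j < n.1.natAbs + n.2.natAbs := by omega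
  by_cases hcase : j < n.1.natAbs
  · -- horizontal
    have hn1 : n.1 ≠ 0 := by
      intro h; rw [h] at hcase; simp at hcase
    set s := n.1.sign with hs
    have hspm : s = 1 ∨ s = -1 := sign_pm hn1
    have ha : pathPt x n j = (x.1 + s * j, x.2) := pathPt_le (by omega)
    have ha' : pathPt x n K = (x.1 + s * (j + 1), x.2) := by
      rw [hKj, pathPt_le (by omega)]
      push_cast
      rw [← hs]
    refine ⟨pathPt x n j, pathPt x n K, n, j, hjΔ, hKspec, ?_, ?_, hcase, ?_, ?_⟩
    · rw [ha, ha']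
      have : (x.1 + s * j, x.2) - (x.1 + s * (j+1), x.2) = (-s, 0) := by
        simp [Prod.ext_iff]; ring
      rw [this]
      exact (zNorm_unit (s := -s) (by rcases hspm with h|h <;> simp [h])).1
    · intro h; rw [h] at hy'; simp at hy'; exact hy ((hy' ▸ hx))
    · rw [ha, ha', recon]
      have hc : ((x.1 + s * (j+1), x.2) : ℤ × ℤ).2 = ((x.1 + s * j, x.2) : ℤ × ℤ).2 := rfl
      rw [if_pos hc]
      simp only [Prod.ext_iff]
      constructor
      · constructor <;> simp [← hs] <;> try ring
      · rw [hy']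
        constructor <;> simp [← hs] <;> try ring
    · rw [hn]
      have : x - y = -(y - x) := by ring
      rw [this]
      unfold zNorm
      simp only [Prod.fst_neg, Prod.snd_neg, Int.cast_neg, neg_sq]
  · -- vertical
    push_neg at hcase
    set i := j - n.1.natAbs with hi
    have hiN : i < n.2.natAbs := by omega
    have hn2 : n.2 ≠ 0 := by
      intro h; rw [h] at hiN; simp at hiN
    set s := n.2.sign with hs
    have hspm : s = 1 ∨ s = -1 := sign_pm hn2
    have ha : pathPt x n j = (x.1 + n.1, x.2 + s * i) := by
      rw [pathPt_ge (by omega) (by omega)]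
    have ha' : pathPt x n K = (x.1 + n.1, x.2 + s * (i + 1)) := by
      rw [hKj, pathPt_ge (by omega) (by omega)]
      have : ((j + 1 - n.1.natAbs : ℕ) : ℤ) = (i : ℤ) + 1 := by push_cast [hi]; omega
      rw [this]
    have hs0 : s ≠ 0 := by rcases hspm with h|h <;> simp [h]
    refine ⟨pathPt x n j, pathPt x n K, (n.2, n.1), i, hjΔ, hKspec, ?_, ?_, hiN, ?_, ?_⟩
    · rw [ha, ha']
      have : (x.1 + n.1, x.2 + s * i) - (x.1 + n.1, x.2 + s * (i+1)) = ((0 : ℤ), -s) := by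
        simp [Prod.ext_iff]; ring
      rw [this]
      exact (zNorm_unit (s := -s) (by rcases hspm with h|h <;> simp [h])).2
    · intro h0; exact hn2 (congrArg Prod.fst h0)
    · rw [ha, ha', recon]
      have hc : ¬ ((x.1 + n.1, x.2 + s * (i+1)) : ℤ × ℤ).2 = ((x.1 + n.1, x.2 + s * i) : ℤ × ℤ).2 := by
        simp only
        intro h
        apply hs0
        have : s * (i+1) = s * i := by linarith [h]
        nlinarith [this]
      rw [if_neg hc]
      simp only [Prod.ext_iff]
      constructor
      · constructor <;> simp [← hs] <;> try ring
      · rw [hy']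
        constructor <;> simp [← hs] <;> try ring
    · show zNorm (n.2, n.1) = _
      have h1 : zNorm (n.2, n.1) = zNorm n := by unfold zNorm; simp [add_comm]
      have : x - y = -(y - x) := by ring
      rw [h1, this, hn]
      unfold zNorm
      simp only [Prod.fst_neg, Prod.snd_neg, Int.cast_neg, neg_sq]

def Vt : Type := Σ mm : {m : ℤ × ℤ // m ≠ 0}, Fin mm.1.1.natAbs

lemma zNorm_eq_one_cases {v : ℤ × ℤ} (h : zNorm v = 1) :
    v = (1, 0) ∨ v = (-1, 0) ∨ v = (0, 1) ∨ v = (0, -1) := by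
  have h1 : (v.1 : ℝ)^2 + (v.2 : ℝ)^2 = 1 := by
    unfold zNorm at h
    exact Real.sqrt_eq_one.1 h
  have h2 : v.1^2 + v.2^2 = 1 := by exact_mod_cast h1
  obtain ⟨va, vb⟩ := v
  simp only at h2
  have hb1 : -1 ≤ va ∧ va ≤ 1 := by constructor <;> nlinarith [sq_nonneg vb]
  have hb2 : -1 ≤ vb ∧ vb ≤ 1 := by constructor <;> nlinarith [sq_nonneg va]
  obtain ⟨hA, hB⟩ := hb1
  obtain ⟨hC, hD⟩ := hb2
  interval_cases va <;> interval_cases vb <;> simp_all <;> omega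

end helpers

set_option maxHeartbeats 2000000 in
/-- For a finite `Δ ⊂ ℤ²` and `p > 4`, the self-energy
`U(Δ) = -2 Σ_{x∈Δ} Σ_{y∉Δ} |x-y|^{-p}` is finite (all inner sums are summable) and
`U(Δ) ≥ -2 |∂Δ| Σ_{n≠0} |n₁|/|n|^p`, where `|∂Δ|` is the number of nearest-neighbor
bonds separating `Δ` from its complement. -/
theorem selfEnergy_lower_bound (p : ℝ) (hp : 4 < p) (Δ : Finset (ℤ × ℤ)) :
    (∀ x ∈ Δ, Summable (fun y : {y : ℤ × ℤ // y ∉ Δ} => zNorm (x - (y : ℤ × ℤ)) ^ (-p))) ∧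
    -2 * ∑ x ∈ Δ, ∑' y : {y : ℤ × ℤ // y ∉ Δ}, zNorm (x - (y : ℤ × ℤ)) ^ (-p)
      ≥ -2 * (({q : (ℤ × ℤ) × (ℤ × ℤ) | q.1 ∈ Δ ∧ q.2 ∉ Δ ∧ zNorm (q.1 - q.2) = 1}.ncard : ℝ))
          * ∑' n : {n : ℤ × ℤ // n ≠ 0}, |((n : ℤ × ℤ).1 : ℝ)| / zNorm (n : ℤ × ℤ) ^ p := by
  have hp2 : (2:ℝ) < p := by linarith
  have part1 : ∀ x ∈ Δ, Summable (fun y : {y : ℤ × ℤ // y ∉ Δ} => zNorm (x - (y : ℤ × ℤ)) ^ (-p)) := by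
    intro x hx
    have hinj : Function.Injective (fun y : {y : ℤ × ℤ // y ∉ Δ} => x - (y : ℤ × ℤ)) := by
      intro u v huv
      simp only at huv
      exact Subtype.ext (by have := sub_right_injective huv; exact this)
    exact (summable_zNorm_rpow hp2).comp_injective hinj
  refine ⟨part1, ?_⟩
  set S : Set ((ℤ × ℤ) × (ℤ × ℤ)) :=
    {q : (ℤ × ℤ) × (ℤ × ℤ) | q.1 ∈ Δ ∧ q.2 ∉ Δ ∧ zNorm (q.1 - q.2) = 1} with hSdef
  -- finiteness of S
  have hS : S.Finite := by
    apply Set.Finite.subset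
      ((Δ ×ˢ (Δ.biUnion fun a => {a - (1,0), a - (-1,0), a - (0,1), a - (0,-1)})).finite_toSet)
    rintro ⟨q1, q2⟩ ⟨h1, h2, h3⟩
    refine Finset.mem_coe.2 (Finset.mem_product.2 ⟨h1, Finset.mem_biUnion.2 ⟨q1, h1, ?_⟩⟩)
    have hv := zNorm_eq_one_cases h3
    simp only [Finset.mem_insert, Finset.mem_singleton]
    rcases hv with h | h | h | h
    · exact Or.inl (by rw [← h]; ring)
    · exact Or.inr (Or.inl (by rw [← h]; ring))
    · exact Or.inr (Or.inr (Or.inl (by rw [← h]; ring)))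
    · exact Or.inr (Or.inr (Or.inr (by rw [← h]; ring)))
  -- summability of the boundary series
  have hC : Summable (fun n : {n : ℤ × ℤ // n ≠ 0} =>
      |((n : ℤ × ℤ).1 : ℝ)| / zNorm (n : ℤ × ℤ) ^ p) := by
    have hbase : Summable (fun n : {n : ℤ × ℤ // n ≠ 0} => zNorm (n : ℤ × ℤ) ^ (-(p-1))) :=
      (summable_zNorm_rpow (by linarith)).subtype _
    refine hbase.of_nonneg_of_le (fun n => div_nonneg (abs_nonneg _) (Real.rpow_nonneg (zNorm_nonneg _) _)) (fun n => ?_)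
    have hT : 0 < zNorm (n : ℤ × ℤ) := zNorm_pos n.2
    have hTp : 0 < zNorm (n : ℤ × ℤ) ^ p := Real.rpow_pos_of_pos hT p
    rw [div_le_iff₀ hTp, ← Real.rpow_add hT]
    have : -(p-1) + p = 1 := by ring
    rw [this, Real.rpow_one]
    exact abs_fst_le_zNorm _
  have hCnonneg : (0:ℝ) ≤ ∑' n : {n : ℤ × ℤ // n ≠ 0}, |((n : ℤ × ℤ).1 : ℝ)| / zNorm (n : ℤ × ℤ) ^ p :=
    tsum_nonneg (fun n => div_nonneg (abs_nonneg _) (Real.rpow_nonneg (zNorm_nonneg _) _))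
  set C : ℝ := ∑' n : {n : ℤ × ℤ // n ≠ 0}, |((n : ℤ × ℤ).1 : ℝ)| / zNorm (n : ℤ × ℤ) ^ p with hCdef
  set B : ℝ := (S.ncard : ℝ) with hBdef
  have hBnonneg : 0 ≤ B := Nat.cast_nonneg _
  -- main bound
  have hAle : ∑ x ∈ Δ, ∑' y : {y : ℤ × ℤ // y ∉ Δ}, zNorm (x - (y : ℤ × ℤ)) ^ (-p) ≤ B * C := by
    -- the type of pairs
    set T := {z : (ℤ × ℤ) × (ℤ × ℤ) // z.1 ∈ Δ ∧ z.2 ∉ Δ} with hT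
    have cross := fun z : T => crossing Δ z.2.1 z.2.2
    choose a a' m i h1 h2 h3 h4 h5 h6 h7 using cross
    let Φ : T → ↑S × Vt := fun z =>
      (⟨(a z, a' z), ⟨h1 z, h2 z, h3 z⟩⟩, ⟨⟨m z, h4 z⟩, ⟨i z, h5 z⟩⟩)
    have hrec : ∀ z : T, recon ((Φ z).1.1) ((Φ z).2.1.1) ((Φ z).2.2.1) = z.1 := by
      intro z
      have := h6 z
      simpa using this
    have hΦinj : Function.Injective Φ := by
      intro z₁ z₂ hzz
      apply Subtype.ext
      rw [← hrec z₁, ← hrec z₂, hzz]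
    let e : T ≃ ↑Δ × {y : ℤ × ℤ // y ∉ Δ} :=
      { toFun := fun z => (⟨z.1.1, z.2.1⟩, ⟨z.1.2, z.2.2⟩)
        invFun := fun w => ⟨(w.1.1, w.2.1), w.1.2, w.2.2⟩
        left_inv := fun z => by apply Subtype.ext; exact Prod.mk.eta
        right_inv := fun w => by
          apply Prod.ext <;> apply Subtype.ext <;> rfl }
    have key : ENNReal.ofReal (∑ x ∈ Δ, ∑' y : {y : ℤ × ℤ // y ∉ Δ}, zNorm (x - (y:ℤ×ℤ)) ^ (-p))
        ≤ ENNReal.ofReal (B * C) := by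
      calc ENNReal.ofReal (∑ x ∈ Δ, ∑' y : {y : ℤ × ℤ // y ∉ Δ}, zNorm (x - (y:ℤ×ℤ)) ^ (-p))
          = ∑ x ∈ Δ, ENNReal.ofReal (∑' y : {y : ℤ × ℤ // y ∉ Δ}, zNorm (x - (y:ℤ×ℤ)) ^ (-p)) :=
            ENNReal.ofReal_sum_of_nonneg
              (fun x _ => tsum_nonneg (fun y => Real.rpow_nonneg (zNorm_nonneg _) _))
        _ = ∑ x ∈ Δ, ∑' y : {y : ℤ × ℤ // y ∉ Δ}, ENNReal.ofReal (zNorm (x - (y:ℤ×ℤ)) ^ (-p)) :=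
            Finset.sum_congr rfl (fun x hx => ENNReal.ofReal_tsum_of_nonneg
              (fun y => Real.rpow_nonneg (zNorm_nonneg _) _) (part1 x hx))
        _ = ∑' x : ↑Δ, ∑' y : {y : ℤ × ℤ // y ∉ Δ},
              ENNReal.ofReal (zNorm ((x:ℤ×ℤ) - (y:ℤ×ℤ)) ^ (-p)) :=
            (Finset.tsum_subtype Δ _).symm
        _ = ∑' w : ↑Δ × {y : ℤ × ℤ // y ∉ Δ},
              ENNReal.ofReal (zNorm ((w.1:ℤ×ℤ) - (w.2:ℤ×ℤ)) ^ (-p)) :=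
            (ENNReal.tsum_prod (f := fun (x : ↑Δ) (y : {y : ℤ × ℤ // y ∉ Δ}) =>
              ENNReal.ofReal (zNorm ((x:ℤ×ℤ) - (y:ℤ×ℤ)) ^ (-p)))).symm
        _ = ∑' z : T, ENNReal.ofReal (zNorm (z.1.1 - z.1.2) ^ (-p)) :=
            (Equiv.tsum_eq e (fun w => ENNReal.ofReal (zNorm ((w.1:ℤ×ℤ) - (w.2:ℤ×ℤ)) ^ (-p)))).symm
        _ = ∑' z : T, ENNReal.ofReal (zNorm (m z) ^ (-p)) := tsum_congr (fun z => by
              rw [h7 z])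
        _ = ∑' z : T, (fun w : ↑S × Vt => ENNReal.ofReal (zNorm w.2.1.1 ^ (-p))) (Φ z) := rfl
        _ ≤ ∑' w : ↑S × Vt, (fun w : ↑S × Vt => ENNReal.ofReal (zNorm w.2.1.1 ^ (-p))) w :=
            ENNReal.tsum_comp_le_tsum_of_injective hΦinj
              (fun w : ↑S × Vt => ENNReal.ofReal (zNorm w.2.1.1 ^ (-p)))
        _ = ∑' _b : ↑S, ∑' v : Vt, ENNReal.ofReal (zNorm v.1.1 ^ (-p)) :=
            ENNReal.tsum_prod (f := fun (_b : ↑S) (v : Vt) => ENNReal.ofReal (zNorm v.1.1 ^ (-p)))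
        _ = ∑' _b : ↑S, ENNReal.ofReal C := by
            refine tsum_congr (fun b => ?_)
            calc ∑' v : Vt, ENNReal.ofReal (zNorm v.1.1 ^ (-p))
                = ∑' mm : {m : ℤ × ℤ // m ≠ 0}, ∑' _i : Fin mm.1.1.natAbs,
                    ENNReal.ofReal (zNorm mm.1 ^ (-p)) :=
                  ENNReal.tsum_sigma (β := fun mm : {m : ℤ × ℤ // m ≠ 0} => Fin mm.1.1.natAbs)
                    (fun mm _ => ENNReal.ofReal (zNorm mm.1 ^ (-p)))
              _ = ∑' mm : {m : ℤ × ℤ // m ≠ 0},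
                    ENNReal.ofReal (|((mm:ℤ×ℤ).1 : ℝ)| / zNorm (mm:ℤ×ℤ) ^ p) := by
                  refine tsum_congr (fun mm => ?_)
                  rw [tsum_fintype]
                  rw [Finset.sum_const, Finset.card_univ, Fintype.card_fin, nsmul_eq_mul]
                  rw [← ENNReal.ofReal_natCast, ← ENNReal.ofReal_mul (Nat.cast_nonneg _)]
                  congr 1
                  have hT0 : (0:ℝ) < zNorm (mm:ℤ×ℤ) := zNorm_pos mm.2
                  rw [Real.rpow_neg (le_of_lt hT0), div_eq_mul_inv]
                  congr 1
                  rw [Nat.cast_natAbs, Int.cast_abs]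
              _ = ENNReal.ofReal C :=
                  (ENNReal.ofReal_tsum_of_nonneg
                    (fun n => div_nonneg (abs_nonneg _) (Real.rpow_nonneg (zNorm_nonneg _) _))
                    hC).symm
        _ = (S.ncard : ENNReal) * ENNReal.ofReal C := by
            haveI : Fintype ↑S := hS.fintype
            rw [tsum_fintype, Finset.sum_const, Finset.card_univ, nsmul_eq_mul]
            congr 1
            rw [← Nat.card_coe_set_eq, Nat.card_eq_fintype_card]
        _ = ENNReal.ofReal (B * C) := by
            rw [ENNReal.ofReal_mul hBnonneg, hBdef, ENNReal.ofReal_natCast]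
    exact (ENNReal.ofReal_le_ofReal_iff (mul_nonneg hBnonneg hCnonneg)).1 key
  have h2 := mul_le_mul_of_nonneg_left hAle (by norm_num : (0:ℝ) ≤ 2)
  nlinarith [h2]
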